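/- Let k be an algebraically closed field of characteristic 0, let G be a group, and let ρ be a 5-dimensional representation of G over k on a vector space V such that det(ρ(g)) = 1 for all g ∈ G and there is a nondegenerate symmetric bilinear form B on V with B(ρ(g)v, ρ(g)w) = B(v, w) for all g ∈ G and v, w ∈ V. Suppose V has a 2-dimensional irreducible subrepresentation ρ′ with ρ′ ≅ (ρ′)^∨. Then for every g ∈ G with (det ρ′)(g) = −1, the element −1 is an eigenvalue of ρ(g) and (X + 1)² divides the characteristic polynomial of ρ(g). -/

import Mathlib

/-!
Statement 11: Let `k` be algebraically closed of characteristic 0 and `ρ` a 5-dimensional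
representation of `G` over `k` on `V` with trivial determinant, preserving a nondegenerate
symmetric bilinear form.  Suppose `V` has a 2-dimensional irreducible subrepresentation `ρ′`
with `ρ′ ≅ (ρ′)^∨`.  Then for every `g` with `det ρ′ (g) = −1`, `−1` is an eigenvalue of
`ρ g` and `(X + 1)²` divides the characteristic polynomial of `ρ g`.
-/

open Module Polynomial Matrix

section Aux

variable {k : Type} [Field k]

/-- charpoly of the transpose. -/
lemma aux_charpoly_transpose {n : Type} [Fintype n] [DecidableEq n] (M : Matrix n n k) :
    Matrix.charpoly Mᵀ = Matrix.charpoly M := by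
  have h : Matrix.charmatrix Mᵀ = (Matrix.charmatrix M)ᵀ := by
    ext i j
    by_cases hij : i = j
    · subst hij
      simp [Matrix.charmatrix_apply]
    · simp [Matrix.charmatrix_apply_ne _ _ _ hij,
        Matrix.charmatrix_apply_ne _ _ _ (Ne.symm hij), Matrix.transpose_apply]
  rw [Matrix.charpoly, Matrix.charpoly, h, Matrix.det_transpose]

/-- charpoly is invariant under equivariant equivalences. -/
lemma aux_charpoly_conj {V W : Type} [AddCommGroup V] [Module k V] [FiniteDimensional k V]
    [AddCommGroup W] [Module k W] [FiniteDimensional k W]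
    (e : V ≃ₗ[k] W) (f : Module.End k V) (g : Module.End k W)
    (h : ∀ v : V, e (f v) = g (e v)) :
    LinearMap.charpoly g = LinearMap.charpoly f := by
  let b := Module.finBasis k V
  let b' := b.map e
  have hM : LinearMap.toMatrix b' b' g = LinearMap.toMatrix b b f := by
    ext i j
    rw [LinearMap.toMatrix_apply, LinearMap.toMatrix_apply, Basis.map_apply, ← h,
      Basis.map_repr, LinearEquiv.trans_apply, LinearEquiv.symm_apply_apply]
  rw [← LinearMap.charpoly_toMatrix f b, ← LinearMap.charpoly_toMatrix g b', hM]

/-- charpoly of the dual map. -/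
lemma aux_charpoly_dualMap {V : Type} [AddCommGroup V] [Module k V] [FiniteDimensional k V]
    (f : Module.End k V) :
    LinearMap.charpoly (LinearMap.dualMap f) = LinearMap.charpoly f := by
  let b := Module.finBasis k V
  rw [← LinearMap.charpoly_toMatrix f b,
    ← LinearMap.charpoly_toMatrix (LinearMap.dualMap f) b.dualBasis,
    LinearMap.dualMap_def, LinearMap.toMatrix_transpose, aux_charpoly_transpose]

lemma aux_reverse_pow (p : k[X]) (m : ℕ) : (p ^ m).reverse = p.reverse ^ m := by
  induction m with
  | zero => rw [pow_zero, pow_zero, ← Polynomial.C_1, Polynomial.reverse_C]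
  | succ n ih => rw [pow_succ, pow_succ, Polynomial.reverse_mul_of_domain, ih]

lemma aux_reverse_X_add_one : (X + 1 : k[X]).reverse = X + 1 := by
  have h1 : (X + 1 : k[X]) = X + C 1 := by rw [Polynomial.C_1]
  rw [h1, Polynomial.reverse_add_C]
  have hX : (X : k[X]).reverse = 1 := by
    have : (X : k[X]) = 1 * X := (one_mul _).symm
    rw [this, Polynomial.reverse_mul_X, ← Polynomial.C_1, Polynomial.reverse_C]
  rw [hX, Polynomial.natDegree_X, Polynomial.C_1, one_mul, pow_one, add_comm]

end Aux

theorem stmt_11 {k G V : Type} [Field k] [IsAlgClosed k] [CharZero k] [Group G]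
    [AddCommGroup V] [Module k V] [FiniteDimensional k V]
    (ρ : Representation k G V) (h5 : finrank k V = 5)
    (hdet : ∀ g : G, LinearMap.det (ρ g) = 1)
    (B : V →ₗ[k] V →ₗ[k] k)
    (hBsymm : ∀ v w : V, B v w = B w v)
    (hBnd : ∀ v : V, (∀ w : V, B v w = 0) → v = 0)
    (hBinv : ∀ (g : G) (v w : V), B (ρ g v) (ρ g w) = B v w)
    -- a 2-dimensional irreducible self-dual subrepresentation ρ′ on p
    (p : Submodule k V) (hp2 : finrank k p = 2)
    (hinv : ∀ g : G, ∀ v ∈ p, ρ g v ∈ p)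
    (hirr : ∀ q : Submodule k V, q ≤ p → (∀ g : G, ∀ v ∈ q, ρ g v ∈ q) →
      q = ⊥ ∨ q = p)
    (hsd : ∃ e : p ≃ₗ[k] Module.Dual k p,
      ∀ (g : G) (v : p), e ((ρ g).restrict (hinv g) v) =
        LinearMap.dualMap ((ρ g⁻¹).restrict (hinv g⁻¹)) (e v)) :
    ∀ g : G, LinearMap.det ((ρ g).restrict (hinv g)) = -1 →
      Module.End.HasEigenvalue (ρ g) (-1) ∧
      (X + 1) ^ 2 ∣ LinearMap.charpoly (ρ g) := by
  intro g hdg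
  obtain ⟨e, he⟩ := hsd
  set A : Module.End k p := (ρ g).restrict (hinv g) with hA
  set A' : Module.End k p := (ρ g⁻¹).restrict (hinv g⁻¹) with hA'
  -- A and A' are mutually inverse
  have hAA' : A ∘ₗ A' = LinearMap.id := by
    ext x
    simp only [LinearMap.comp_apply, LinearMap.id_apply, hA, hA',
      LinearMap.restrict_coe_apply]
    rw [← Module.End.mul_apply, ← _root_.map_mul, mul_inv_cancel, _root_.map_one, Module.End.one_apply]
  have hA'A : A' ∘ₗ A = LinearMap.id := by
    ext x
    simp only [LinearMap.comp_apply, LinearMap.id_apply, hA, hA',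
      LinearMap.restrict_coe_apply]
    rw [← Module.End.mul_apply, ← _root_.map_mul, inv_mul_cancel, _root_.map_one, Module.End.one_apply]
  -- charpoly A = charpoly A'
  have hcpAA' : LinearMap.charpoly A = LinearMap.charpoly A' := by
    have h1 := aux_charpoly_conj e A (LinearMap.dualMap A') (he g)
    rw [← h1, aux_charpoly_dualMap]
  -- matrices
  let b2 : Basis (Fin 2) k p := Module.finBasisOfFinrankEq k p hp2
  set Ma : Matrix (Fin 2) (Fin 2) k := LinearMap.toMatrix b2 b2 A with hMa
  set Na : Matrix (Fin 2) (Fin 2) k := LinearMap.toMatrix b2 b2 A' with hNa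
  have hMNa : Ma * Na = 1 := by
    rw [hMa, hNa, ← LinearMap.toMatrix_comp b2 b2 b2, hAA', LinearMap.toMatrix_id]
  have hNMa : Na * Ma = 1 := by
    rw [hMa, hNa, ← LinearMap.toMatrix_comp b2 b2 b2, hA'A, LinearMap.toMatrix_id]
  have hdetMa : Ma.det = -1 := by rw [hMa, LinearMap.det_toMatrix]; exact hdg
  have hcpMa : Ma.charpoly = Na.charpoly := by
    rw [hMa, hNa, LinearMap.charpoly_toMatrix, LinearMap.charpoly_toMatrix, hcpAA']
  -- Na = - adjugate Ma
  have hadj : Ma * (-(Ma.adjugate)) = 1 := by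
    rw [Matrix.mul_neg, Matrix.mul_adjugate, hdetMa, neg_smul, one_smul, neg_neg]
  have hNa_adj : Na = -(Ma.adjugate) := by
    calc Na = Na * (Ma * (-(Ma.adjugate))) := by rw [hadj, mul_one]
    _ = (Na * Ma) * (-(Ma.adjugate)) := by rw [mul_assoc]
    _ = -(Ma.adjugate) := by rw [hNMa, one_mul]
  have htrNa : Na.trace = -Ma.trace := by
    rw [hNa_adj, Matrix.trace_neg, Matrix.adjugate_fin_two, Matrix.trace_fin_two,
      Matrix.trace_fin_two]
    simp [add_comm]
  have htr : Ma.trace = 0 := by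
    have h1 : Ma.trace = -Ma.charpoly.coeff 1 := by
      have := Matrix.trace_eq_neg_charpoly_coeff Ma
      simpa using this
    have h2 : Na.trace = -Na.charpoly.coeff 1 := by
      have := Matrix.trace_eq_neg_charpoly_coeff Na
      simpa using this
    have h3 : Ma.trace = Na.trace := by rw [h1, h2, hcpMa]
    have h4 : Ma.trace = -Ma.trace := h3.trans htrNa
    have : (2 : k) * Ma.trace = 0 := by linear_combination h4
    rcases mul_eq_zero.mp this with h | h
    · exact absurd h two_ne_zero
    · exact h
  -- eigenvector of A for -1
  have hdet0 : ((-1 : k) • (1 : Matrix (Fin 2) (Fin 2) k) - Ma).det = 0 := by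
    have h00 : Ma 0 0 + Ma 1 1 = 0 := by rw [← Matrix.trace_fin_two]; exact htr
    have hdd : Ma 0 0 * Ma 1 1 - Ma 0 1 * Ma 1 0 = -1 := by
      rw [← Matrix.det_fin_two]; exact hdetMa
    rw [Matrix.det_fin_two]
    simp only [Matrix.sub_apply, Matrix.smul_apply, Matrix.one_apply_eq,
      Matrix.one_apply_ne (by norm_num : (0 : Fin 2) ≠ 1),
      Matrix.one_apply_ne (by norm_num : (1 : Fin 2) ≠ 0), smul_eq_mul]
    ring_nf
    linear_combination h00 + hdd
  have hdetA0 : LinearMap.det ((-1 : k) • (LinearMap.id : Module.End k p) - A) = 0 := by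
    rw [← LinearMap.det_toMatrix b2, _root_.map_sub, _root_.map_smul, LinearMap.toMatrix_id]
    exact hdet0
  have hker : ∃ x : p, x ≠ 0 ∧ A x = -x := by
    have hlt := LinearMap.bot_lt_ker_of_det_eq_zero hdetA0
    obtain ⟨x, hxmem, hx0⟩ := (Submodule.ne_bot_iff _).mp (ne_of_gt hlt)
    refine ⟨x, hx0, ?_⟩
    have := LinearMap.mem_ker.mp hxmem
    have h1 : (-1 : k) • x - A x = 0 := by simpa using this
    have h2 : A x = (-1 : k) • x := by
      rw [← sub_eq_zero]
      rw [← neg_sub]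
      rw [h1]
      simp
    simpa using h2
  obtain ⟨x, hx0, hAx⟩ := hker
  have hwne : (x : V) ≠ 0 := fun hc => hx0 (Subtype.ext hc)
  have hρw : ρ g (x : V) = -(x : V) := by
    have h1 : ((A x : p) : V) = ρ g (x : V) := LinearMap.restrict_coe_apply _ _ _
    rw [← h1, hAx]
    simp
  have hev : Module.End.HasEigenvalue (ρ g) (-1) := by
    apply Module.End.hasEigenvalue_of_hasEigenvector (x := (x : V))
    refine ⟨?_, hwne⟩
    rw [Module.End.mem_eigenspace_iff, hρw, neg_one_smul]
  refine ⟨hev, ?_⟩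
  -- Part 2: (X+1)^2 divides charpoly
  let b5 : Basis (Fin 5) k V := Module.finBasisOfFinrankEq k V h5
  set M : Matrix (Fin 5) (Fin 5) k := LinearMap.toMatrix b5 b5 (ρ g) with hM
  set N : Matrix (Fin 5) (Fin 5) k := LinearMap.toMatrix b5 b5 (ρ g⁻¹) with hN
  have hρρ' : (ρ g) ∘ₗ (ρ g⁻¹) = LinearMap.id := by
    ext v
    simp only [LinearMap.comp_apply, LinearMap.id_apply]
    rw [← Module.End.mul_apply, ← _root_.map_mul, mul_inv_cancel, _root_.map_one, Module.End.one_apply]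
  have hρ'ρ : (ρ g⁻¹) ∘ₗ (ρ g) = LinearMap.id := by
    ext v
    simp only [LinearMap.comp_apply, LinearMap.id_apply]
    rw [← Module.End.mul_apply, ← _root_.map_mul, inv_mul_cancel, _root_.map_one, Module.End.one_apply]
  have hMN : M * N = 1 := by
    rw [hM, hN, ← LinearMap.toMatrix_comp b5 b5 b5, hρρ', LinearMap.toMatrix_id]
  have hNM : N * M = 1 := by
    rw [hM, hN, ← LinearMap.toMatrix_comp b5 b5 b5, hρ'ρ, LinearMap.toMatrix_id]
  have hdetM : M.det = 1 := by rw [hM, LinearMap.det_toMatrix]; exact hdet g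
  -- B gives a self-duality of ρ, so charpoly (ρ g) = charpoly (ρ g⁻¹)
  have hBbij : Function.Bijective (B : V →ₗ[k] Module.Dual k V) := by
    have hinj : Function.Injective (B : V →ₗ[k] Module.Dual k V) := by
      rw [← LinearMap.ker_eq_bot]
      rw [Submodule.eq_bot_iff]
      intro v hv
      apply hBnd
      intro w
      rw [LinearMap.mem_ker.mp hv]
      rfl
    exact ⟨hinj, (LinearMap.injective_iff_surjective_of_finrank_eq_finrank
      (Subspace.dual_finrank_eq).symm).mp hinj⟩
  let eB : V ≃ₗ[k] Module.Dual k V := LinearEquiv.ofBijective B hBbij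
  have heB : ∀ v : V, eB (ρ g v) = LinearMap.dualMap (ρ g⁻¹) (eB v) := by
    intro v
    apply LinearMap.ext
    intro w
    have h1 : (eB (ρ g v)) w = B (ρ g v) w := rfl
    have h2 : (LinearMap.dualMap (ρ g⁻¹) (eB v)) w = B v (ρ g⁻¹ w) := rfl
    rw [h1, h2]
    conv_lhs => rw [show w = ρ g (ρ g⁻¹ w) by
      rw [← LinearMap.comp_apply, hρρ', LinearMap.id_apply]]
    exact hBinv g v (ρ g⁻¹ w)
  have hcpV : LinearMap.charpoly (ρ g) = LinearMap.charpoly (ρ g⁻¹) := by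
    have h1 := aux_charpoly_conj eB (ρ g) (LinearMap.dualMap (ρ g⁻¹)) heB
    rw [← h1, aux_charpoly_dualMap]
  have hcpMN : N.charpoly = M.charpoly := by
    rw [hM, hN, LinearMap.charpoly_toMatrix, LinearMap.charpoly_toMatrix, hcpV]
  -- the functional equation:  charpoly M = - reverse (charpoly M)
  have hrev : M.charpoly = -M.charpoly.reverse := by
    set MC : Matrix (Fin 5) (Fin 5) k[X] := (C : k →+* k[X]).mapMatrix M with hMC
    set NC : Matrix (Fin 5) (Fin 5) k[X] := (C : k →+* k[X]).mapMatrix N with hNC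
    have hdetMC : MC.det = 1 := by rw [hMC, ← RingHom.map_det, hdetM, Polynomial.C_1]
    have hNmC : NC * MC = 1 := by
      have h := congrArg (fun P => (C : k →+* k[X]).mapMatrix P) hNM
      simpa [hMC, hNC] using h
    have hscalar : Matrix.scalar (Fin 5) (X : k[X]) = (X : k[X]) • 1 := by
      rw [Matrix.scalar_apply, Matrix.smul_one_eq_diagonal]
    have hcharN : N.charmatrix * MC = (X : k[X]) • MC - 1 := by
      rw [Matrix.charmatrix, Matrix.sub_mul, ← hNC, hNmC, hscalar, Matrix.smul_mul, one_mul]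
    have h1 : N.charpoly = ((X : k[X]) • MC - 1).det := by
      rw [Matrix.charpoly, ← hcharN, Matrix.det_mul, hdetMC, mul_one]
    have h2 : ((X : k[X]) • MC - 1).det = -((1 - (X : k[X]) • MC).det) := by
      rw [show (X : k[X]) • MC - 1 = -((1 : Matrix (Fin 5) (Fin 5) k[X]) - (X : k[X]) • MC) from
        (neg_sub _ _).symm, Matrix.det_neg, Fintype.card_fin]
      norm_num
    have h3 : M.charpolyRev = (1 - (X : k[X]) • MC).det := by
      rw [Matrix.charpolyRev, hMC, RingHom.mapMatrix_apply]
    calc M.charpoly = N.charpoly := hcpMN.symm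
    _ = ((X : k[X]) • MC - 1).det := h1
    _ = -((1 - (X : k[X]) • MC).det) := h2
    _ = -M.charpolyRev := by rw [h3]
    _ = -M.charpoly.reverse := by rw [Matrix.reverse_charpoly]
  -- root and multiplicity
  have hcpM : M.charpoly = LinearMap.charpoly (ρ g) := LinearMap.charpoly_toMatrix _ _
  have hχ0 : M.charpoly ≠ 0 := (Matrix.charpoly_monic M).ne_zero
  have hroot : M.charpoly.IsRoot (-1) := by
    have hmin : (minpoly k (ρ g)).IsRoot (-1) := Module.End.hasEigenvalue_iff_isRoot.mp hev
    have hdvd : minpoly k (ρ g) ∣ LinearMap.charpoly (ρ g) := LinearMap.minpoly_dvd_charpoly _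
    rw [hcpM]
    exact hmin.dvd hdvd
  set m : ℕ := M.charpoly.rootMultiplicity (-1) with hm
  set q : k[X] := M.charpoly /ₘ (X - C (-1)) ^ m with hq
  have hfact : (X - C (-1)) ^ m * q = M.charpoly :=
    Polynomial.pow_mul_divByMonic_rootMultiplicity_eq _ _
  have hq0 : q.eval (-1) ≠ 0 :=
    Polynomial.eval_divByMonic_pow_rootMultiplicity_ne_zero (-1) hχ0
  have hm1 : 0 < m := (Polynomial.rootMultiplicity_pos hχ0).mpr hroot
  have hXC : (X - C (-1) : k[X]) = X + 1 := by
    rw [map_neg, Polynomial.C_1, sub_neg_eq_add]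
  have hX1ne : (X + 1 : k[X]) ≠ 0 := by
    rw [← hXC]; exact Polynomial.X_sub_C_ne_zero (-1)
  have hqne : q ≠ 0 := by
    intro hc
    rw [hc, mul_zero] at hfact
    exact hχ0 hfact.symm
  have hdeg : M.charpoly.natDegree = 5 := by
    rw [Matrix.charpoly_natDegree_eq_dim, Fintype.card_fin]
  have hmd : m + q.natDegree = 5 := by
    rw [← hdeg, ← hfact, Polynomial.natDegree_mul (pow_ne_zero _ (hXC ▸ hX1ne)) hqne,
      Polynomial.natDegree_pow, hXC]
    have h11 : (X + 1 : k[X]).natDegree = 1 := by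
      rw [← hXC, Polynomial.natDegree_X_sub_C]
    rw [h11, mul_one]
  -- q = - reverse q
  have hqrev : q = -q.reverse := by
    have h1 : M.charpoly.reverse = (X + 1) ^ m * q.reverse := by
      rw [← hfact, hXC, Polynomial.reverse_mul_of_domain, aux_reverse_pow,
        aux_reverse_X_add_one]
    have h2 : (X + 1 : k[X]) ^ m * q = (X + 1) ^ m * (-q.reverse) := by
      rw [mul_neg, ← h1]
      rw [← hXC] at *
      rw [hfact]
      exact hrev
    exact mul_left_cancel₀ (pow_ne_zero _ hX1ne) h2
  -- evaluate the reverse identity at -1 to get parity of m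
  have hEvenm : Even m := by
    letI : Invertible (-1 : k) := ⟨-1, by norm_num, by norm_num⟩
    have heq : q.reverse.eval (-1) * (-1) ^ q.natDegree = q.eval (-1) := by
      have h0 := Polynomial.eval₂_reverse_mul_pow (RingHom.id k) (-1) q
      have hinv : (⅟(-1 : k)) = -1 := by
        rw [invOf_eq_inv]; norm_num
      rw [hinv] at h0
      exact h0
    have hqrev' : q.reverse = -q := by linear_combination hqrev
    rw [hqrev'] at heq
    rw [Polynomial.eval_neg] at heq
    have hodd : Odd q.natDegree := by
      rcases Nat.even_or_odd q.natDegree with hE | hO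
      · exfalso
        rw [hE.neg_one_pow, mul_one] at heq
        apply hq0
        linear_combination -heq/2
      · exact hO
    obtain ⟨j, hj⟩ := hodd
    refine ⟨(2 - j), ?_⟩
    omega
  have hm2 : 2 ≤ m := by
    obtain ⟨r, hr⟩ := hEvenm
    omega
  -- conclude
  have hdvd1 : (X + 1 : k[X]) ^ 2 ∣ (X + 1) ^ m := pow_dvd_pow _ hm2
  have hdvd2 : (X + 1 : k[X]) ^ m ∣ M.charpoly := by
    rw [← hXC]
    exact ⟨q, hfact.symm⟩
  rw [← hcpM]
  exact hdvd1.trans hdvd2
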